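/- Let H be a finite group, I a normal subgroup, G = H/I the quotient, and suppose |G| is prime to a prime p. Let P be a p-Sylow subgroup of I that is also a p-Sylow subgroup of H. Then G is isomorphic to a quotient of a subgroup H' of H with |H'| prime to p. -/

import Mathlib

/-- Step 5.2.3 of Serre's Theorem 3′: if `G = H ⧸ I` has order prime to `p` and `P` is a
`p`-Sylow subgroup of `H` contained in `I`, then `G` is a quotient of a subgroup `H'`
of `H` of order prime to `p`. -/
theorem stmt_9 (H : Type*) [Group H] [Finite H] (I : Subgroup H) [I.Normal]
    (p : ℕ) (hp : p.Prime) (hG : ¬ p ∣ Nat.card (H ⧸ I))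
    (P : Sylow p H) (hPI : (P : Subgroup H) ≤ I) :
    ∃ H' : Subgroup H, ¬ p ∣ Nat.card H' ∧
      ∃ f : H' →* H ⧸ I, Function.Surjective f := by
  haveI : Fact p.Prime := ⟨hp⟩
  -- Frattini argument
  have hFrat : Subgroup.normalizer ((P : Subgroup H) : Set H) ⊔ I = ⊤ :=
    Sylow.normalizer_sup_eq_top' P hPI
  set K : Subgroup H := Subgroup.normalizer ((P : Subgroup H) : Set H) with hK
  have hPK : (P : Subgroup H) ≤ K := Subgroup.le_normalizer
  -- the Sylow as a normal subgroup of its normalizer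
  haveI : ((P : Subgroup H).subgroupOf K).Normal := Subgroup.normal_in_normalizer
  -- p does not divide the index of P
  have hPidx : ¬ p ∣ (P : Subgroup H).index := P.not_dvd_index
  have hrel : ((P : Subgroup H).subgroupOf K).index ∣ (P : Subgroup H).index :=
    Subgroup.relIndex_dvd_index_of_le hPK
  have hidx : ¬ p ∣ ((P : Subgroup H).subgroupOf K).index := fun h => hPidx (h.trans hrel)
  -- Schur-Zassenhaus
  have hcardP : Nat.card ((P : Subgroup H).subgroupOf K) = Nat.card (P : Subgroup H) :=
    Nat.card_congr (Subgroup.subgroupOfEquivOfLe hPK).toEquiv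
  obtain ⟨n, hn⟩ := P.2.exists_card_eq
  have hcop : Nat.Coprime (Nat.card ((P : Subgroup H).subgroupOf K))
      ((P : Subgroup H).subgroupOf K).index := by
    rw [hcardP, hn]
    exact Nat.Coprime.pow_left n (hp.coprime_iff_not_dvd.mpr hidx)
  obtain ⟨H'', hH''⟩ := Subgroup.exists_right_complement'_of_coprime hcop
  refine ⟨H''.map K.subtype, ?_, ?_⟩
  · -- card of complement
    have hcard : Nat.card (H''.map K.subtype) = Nat.card H'' :=
      Nat.card_congr (Subgroup.equivMapOfInjective H'' K.subtype K.subtype_injective).toEquiv.symm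
    rw [hcard, ← hH''.symm.index_eq_card]
    exact hidx
  · -- surjectivity onto the quotient
    refine ⟨(QuotientGroup.mk' I).comp (H''.map K.subtype).subtype, ?_⟩
    have hsup : I ⊔ (H''.map K.subtype) = ⊤ := by
      have h1 : ((P : Subgroup H).subgroupOf K) ⊔ H'' = ⊤ := hH''.sup_eq_top
      have h2 : (P : Subgroup H) ⊔ H''.map K.subtype = K := by
        have := congrArg (Subgroup.map K.subtype) h1
        rw [Subgroup.map_sup, Subgroup.subgroupOf_map_subtype, inf_of_le_left hPK,
          ← MonoidHom.range_eq_map, Subgroup.range_subtype] at this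
        exact this
      calc I ⊔ (H''.map K.subtype) = I ⊔ ((P : Subgroup H) ⊔ H''.map K.subtype) := by
            rw [← sup_assoc, sup_of_le_left hPI]
        _ = I ⊔ K := by rw [h2]
        _ = ⊤ := by rw [sup_comm]; exact hFrat
    intro q
    obtain ⟨g, rfl⟩ := QuotientGroup.mk'_surjective I q
    have hg : g ∈ (↑(I ⊔ H''.map K.subtype) : Set H) := by rw [hsup]; trivial
    rw [sup_comm, Subgroup.mul_normal] at hg
    obtain ⟨a, ha, b, hb, rfl⟩ := hg
    refine ⟨⟨a, ha⟩, ?_⟩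
    simp only [MonoidHom.comp_apply, Subgroup.coe_subtype, QuotientGroup.mk'_apply]
    rw [QuotientGroup.eq]
    simpa using I.inv_mem ((Subgroup.inv_mem_iff I).mpr hb)
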